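/- arXiv:2602.23884 — 2 statements merged into one kernel-verified Lean document; each statement's English description precedes it below -/
import Mathlib

section
/- Let G and H be finite simple graphs with G connected. If the empty bisector graph Ĝ is a complete bipartite graph (its vertex set partitions into two independent sets with every cross pair adjacent), then ξ(G⊙H) = β(Ĝ)·n(H) + α(Ĝ). -/
universe u v

variable {V : Type u} {W : Type v}

/-- A distance-equalizer set of a graph: for every pair of distinct vertices outside `S`
there is a vertex of `S` equidistant to both. -/
def IsDistEqSet {α : Type*} (G : SimpleGraph α) (S : Set α) : Prop :=
  ∀ ⦃x y : α⦄, x ∉ S → y ∉ S → x ≠ y → ∃ w ∈ S, G.dist w x = G.dist w y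

/-- The equidistant dimension of a graph: the minimum cardinality of a distance-equalizer set. -/
noncomputable def eqdim {α : Type*} (G : SimpleGraph α) : ℕ :=
  sInf {n | ∃ S : Set α, IsDistEqSet G S ∧ S.ncard = n}

/-- The bisector of two vertices: vertices equidistant to both. -/
def bisector {α : Type*} (G : SimpleGraph α) (x y : α) : Set α :=
  {w | G.dist w x = G.dist w y}

/-- The empty bisector graph of `G`: two distinct vertices are adjacent iff their bisector
in `G` is empty. -/
def emptyBisector {α : Type*} (G : SimpleGraph α) : SimpleGraph α where
  Adj x y := x ≠ y ∧ bisector G x y = ∅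
  symm := by
    constructor
    rintro x y ⟨h1, h2⟩
    refine ⟨h1.symm, Set.eq_empty_iff_forall_notMem.mpr fun w hw => ?_⟩
    exact Set.eq_empty_iff_forall_notMem.mp h2 w
      ((show G.dist w y = G.dist w x from hw).symm)
  loopless := ⟨fun _ h => h.1 rfl⟩

/-- A vertex cover of a graph: a set of vertices meeting every edge. -/
def IsVertexCover {α : Type*} (G : SimpleGraph α) (C : Set α) : Prop :=
  ∀ ⦃x y : α⦄, G.Adj x y → x ∈ C ∨ y ∈ C

/-- An independent set of a graph: a set of pairwise non-adjacent vertices. -/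
def IsIndepSet {α : Type*} (G : SimpleGraph α) (A : Set α) : Prop :=
  ∀ ⦃x y : α⦄, x ∈ A → y ∈ A → ¬ G.Adj x y

/-- The vertex cover number `β(G)`. -/
noncomputable def vcNum {α : Type*} (G : SimpleGraph α) : ℕ :=
  sInf {n | ∃ C : Set α, IsVertexCover G C ∧ C.ncard = n}

/-- The independence number `α(G)`. -/
noncomputable def indepNum {α : Type*} (G : SimpleGraph α) : ℕ :=
  sSup {n | ∃ A : Set α, IsIndepSet G A ∧ A.ncard = n}

/-- A forward-equalized pair `(X, Y)` of `G`: `X ∪ Y = V(G)` and for every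
`a ∈ X \ Y` and `b ∈ Y \ X` there is `w` with `d(w,a) = d(w,b) + 1`. -/
def IsForwardEqualizedPair {α : Type*} (G : SimpleGraph α) (X Y : Set α) : Prop :=
  X ∪ Y = Set.univ ∧
  ∀ ⦃a⦄, a ∈ X \ Y → ∀ ⦃b⦄, b ∈ Y \ X → ∃ w, G.dist w a = G.dist w b + 1

/-- `β*(G)`: the minimum of `|X ∩ Y|` over all pairs of vertex covers `X, Y` of the
empty bisector graph of `G` such that `(X, Y)` is a forward-equalized pair of `G`. -/
noncomputable def betaStar {α : Type*} (G : SimpleGraph α) : ℕ :=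
  sInf {n | ∃ X Y : Set α,
    IsVertexCover (emptyBisector G) X ∧ IsVertexCover (emptyBisector G) Y ∧
    IsForwardEqualizedPair G X Y ∧ (X ∩ Y).ncard = n}

/-- The corona product `G ⊙ H`: one copy of `H` for each vertex `i` of `G` (the vertices
`Sum.inr (i, w)`), with `i` joined to every vertex of its copy. -/
def corona (G : SimpleGraph V) (H : SimpleGraph W) : SimpleGraph (V ⊕ V × W) where
  Adj x y :=
    match x, y with
    | Sum.inl a, Sum.inl b => G.Adj a b
    | Sum.inl a, Sum.inr p => a = p.1
    | Sum.inr p, Sum.inl a => a = p.1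
    | Sum.inr p, Sum.inr q => p.1 = q.1 ∧ H.Adj p.2 q.2
  symm := by
    constructor
    rintro (a | p) (b | q) h
    · exact h.symm
    · exact h
    · exact h
    · exact ⟨h.1.symm, h.2.symm⟩
  loopless := by
    constructor
    rintro (a | p) h
    · exact G.loopless.irrefl a h
    · exact H.loopless.irrefl p.2 h.2


/-- Lipschitz lower bound along walks. -/
lemma walk_lipschitz_bound {α : Type*} {G : SimpleGraph α} (g : α → ℕ)
    (hg : ∀ x y, G.Adj x y → g x ≤ g y + 1) :
    ∀ {x y : α} (p : G.Walk x y), g x ≤ g y + p.length := by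
  intro x y p
  induction p with
  | nil => simp
  | cons h q ih =>
    simp only [SimpleGraph.Walk.length_cons]
    have := hg _ _ h
    omega

lemma exists_near_vertex {α : Type*} {G : SimpleGraph α} (hG : G.Connected) :
    ∀ {a b : α} (p : G.Walk a b) (t : ℕ), t ≤ p.length →
      ∃ k, G.dist a k ≤ t ∧ G.dist k b ≤ p.length - t := by
  intro a b p
  induction p with
  | @nil u =>
    intro t ht
    simp only [SimpleGraph.Walk.length_nil, Nat.le_zero] at ht
    subst ht
    exact ⟨u, by simp, by simp⟩
  | @cons a c b h q ih =>
    intro t ht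
    match t with
    | 0 => exact ⟨a, by simp, by simpa using SimpleGraph.dist_le (SimpleGraph.Walk.cons h q)⟩
    | (s+1) =>
      obtain ⟨k, hk1, hk2⟩ := ih s (by simpa using ht)
      refine ⟨k, ?_, by simpa using hk2⟩
      calc G.dist a k ≤ G.dist a c + G.dist c k := hG.dist_triangle
        _ ≤ 1 + s := by
            have : G.dist a c ≤ 1 := by
              simpa using SimpleGraph.dist_le h.toWalk
            omega
        _ = s + 1 := by omega

/-- If no vertex is equidistant from `a` and `b`, some vertex is one step closer to `a`. -/
lemma exists_dist_succ {α : Type*} {G : SimpleGraph α} (hG : G.Connected) {a b : α}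
    (hab : a ≠ b) (hbis : ∀ k, G.dist k a ≠ G.dist k b) :
    ∃ k, G.dist k b = G.dist k a + 1 := by
  obtain ⟨p, hp⟩ := hG.exists_walk_length_eq_dist a b
  set m := G.dist a b with hm
  have hmpos : 0 < m := hG.pos_dist_of_ne hab
  -- m is odd
  have hodd : m % 2 = 1 := by
    by_contra h
    have h2 : m % 2 = 0 := by omega
    obtain ⟨k, hk1, hk2⟩ := exists_near_vertex hG p (m / 2) (by omega)
    rw [hp] at hk2
    have htri : m ≤ G.dist a k + G.dist k b := by
      calc m = G.dist a b := hm
        _ ≤ G.dist a k + G.dist k b := hG.dist_triangle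
    have h1 : G.dist a k = m / 2 := by omega
    have h2' : G.dist k b = m / 2 := by omega
    have hcomm : G.dist a k = G.dist k a := SimpleGraph.dist_comm
    exact hbis k (by omega)
  obtain ⟨k, hk1, hk2⟩ := exists_near_vertex hG p ((m - 1) / 2) (by omega)
  rw [hp] at hk2
  have htri : m ≤ G.dist a k + G.dist k b := hG.dist_triangle
  have hcomm : G.dist a k = G.dist k a := SimpleGraph.dist_comm
  refine ⟨k, ?_⟩
  omega

section Corona
variable {V : Type u} {W : Type v} (G : SimpleGraph V) (H : SimpleGraph W)
open SimpleGraph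

lemma corona_adj_inl_inl {a b : V} : (corona G H).Adj (Sum.inl a) (Sum.inl b) ↔ G.Adj a b := Iff.rfl
lemma corona_adj_inl_inr {a : V} {p : V × W} : (corona G H).Adj (Sum.inl a) (Sum.inr p) ↔ a = p.1 := Iff.rfl
lemma corona_adj_inr_inl {a : V} {p : V × W} : (corona G H).Adj (Sum.inr p) (Sum.inl a) ↔ a = p.1 := Iff.rfl
lemma corona_adj_inr_inr {p q : V × W} :
    (corona G H).Adj (Sum.inr p) (Sum.inr q) ↔ p.1 = q.1 ∧ H.Adj p.2 q.2 := Iff.rfl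

/-- The hub embedding as a graph homomorphism. -/
def coronaHom : G →g corona G H where
  toFun := Sum.inl
  map_rel' := fun h => h

variable {G H}

lemma corona_reachable_inl (hG : G.Preconnected) (a b : V) :
    (corona G H).Reachable (Sum.inl a) (Sum.inl b) := by
  obtain ⟨p⟩ := hG a b
  exact ⟨p.map (coronaHom G H)⟩

lemma corona_connected (hG : G.Connected) : (corona G H).Connected := by
  have hne : Nonempty V := hG.nonempty
  constructor
  · rintro (a | p) (b | q)
    · exact corona_reachable_inl hG.preconnected a b
    · exact (corona_reachable_inl hG.preconnected a q.1).trans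
        (SimpleGraph.Adj.reachable (by exact rfl))
    · exact ((corona_reachable_inl hG.preconnected p.1 b).symm.trans
        (SimpleGraph.Adj.reachable (by exact rfl))).symm
    · exact ((SimpleGraph.Adj.reachable (G := corona G H)
        (show (corona G H).Adj (Sum.inr p) (Sum.inl p.1) from rfl)).trans
        (corona_reachable_inl hG.preconnected p.1 q.1)).trans
        (SimpleGraph.Adj.reachable (by exact rfl))

/-- The first Lipschitz certificate. -/
private lemma gLip (hG : G.Connected) (j : V) :
    ∀ x y, (corona G H).Adj x y →
      (Sum.elim (fun k => G.dist k j) (fun p => G.dist p.1 j + 1)) x ≤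
      (Sum.elim (fun k => G.dist k j) (fun p => G.dist p.1 j + 1)) y + 1 := by
  rintro (a | p) (b | q) h
  · simp only [Sum.elim_inl]
    have h1 : G.dist a j ≤ G.dist a b + G.dist b j := hG.dist_triangle
    have hGadj : G.Adj a b := h
    have h2 : G.dist a b ≤ 1 := by simpa using SimpleGraph.dist_le hGadj.toWalk
    omega
  · rw [corona_adj_inl_inr] at h
    rw [h]; simp only [Sum.elim_inl, Sum.elim_inr]; omega
  · rw [corona_adj_inr_inl] at h
    rw [h]; simp only [Sum.elim_inl, Sum.elim_inr]; omega
  · rw [corona_adj_inr_inr] at h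
    simp [h.1]

/-- The second Lipschitz certificate, targeting a leaf in copy `b`. -/
private lemma hLip [DecidableEq V] (hG : G.Connected) (b : V) :
    ∀ x y, (corona G H).Adj x y →
      (Sum.elim (fun k => G.dist k b + 1)
        (fun p => if p.1 = b then 0 else G.dist p.1 b + 2)) x ≤
      (Sum.elim (fun k => G.dist k b + 1)
        (fun p => if p.1 = b then 0 else G.dist p.1 b + 2)) y + 1 := by
  rintro (a | p) (c | q) h
  · simp only [Sum.elim_inl]
    have h1 : G.dist a b ≤ G.dist a c + G.dist c b := hG.dist_triangle
    have hGadj : G.Adj a c := h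
    have h2 : G.dist a c ≤ 1 := by simpa using SimpleGraph.dist_le hGadj.toWalk
    omega
  · rw [corona_adj_inl_inr] at h
    rw [h]
    simp only [Sum.elim_inl, Sum.elim_inr]
    split_ifs with hb
    · simp [hb, SimpleGraph.dist_self]
    · omega
  · rw [corona_adj_inr_inl] at h
    rw [h]
    simp only [Sum.elim_inl, Sum.elim_inr]
    split_ifs with hb <;> omega
  · rw [corona_adj_inr_inr] at h
    simp only [Sum.elim_inr, h.1]
    split_ifs <;> omega

lemma corona_dist_inl_inl (hG : G.Connected) (a b : V) :
    (corona G H).dist (Sum.inl a) (Sum.inl b) = G.dist a b := by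
  apply le_antisymm
  · obtain ⟨p, hp⟩ := hG.exists_walk_length_eq_dist a b
    have : (corona G H).dist (Sum.inl a) (Sum.inl b) ≤ (p.map (coronaHom G H)).length :=
      SimpleGraph.dist_le (p.map (coronaHom G H))
    simpa [hp] using this
  · obtain ⟨p, hp⟩ := (corona_connected hG).exists_walk_length_eq_dist
      (Sum.inl a : V ⊕ V × W) (Sum.inl b)
    have := walk_lipschitz_bound _ (gLip hG b) p
    simpa [hp, SimpleGraph.dist_self] using this

lemma corona_dist_inl_inr (hG : G.Connected) (a b : V) (w : W) :
    (corona G H).dist (Sum.inl a) (Sum.inr (b, w)) = G.dist a b + 1 := by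
  classical
  apply le_antisymm
  · obtain ⟨p, hp⟩ := hG.exists_walk_length_eq_dist a b
    have hadj : (corona G H).Adj (Sum.inl b) (Sum.inr (b, w)) := rfl
    let q : (corona G H).Walk (Sum.inl a) (Sum.inl b) := p.map (coronaHom G H)
    have hq : q.length = p.length := SimpleGraph.Walk.length_map _ _
    have := SimpleGraph.dist_le (q.concat hadj)
    simpa [hp, hq] using this
  · obtain ⟨p, hp⟩ := (corona_connected hG).exists_walk_length_eq_dist
      (Sum.inl a : V ⊕ V × W) (Sum.inr (b, w))
    have := walk_lipschitz_bound _ (hLip hG b) p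
    simpa [hp] using this

lemma corona_dist_inr_inr (hG : G.Connected) {a b : V} (hab : a ≠ b) (u w : W) :
    (corona G H).dist (Sum.inr (a, u)) (Sum.inr (b, w)) = G.dist a b + 2 := by
  classical
  apply le_antisymm
  · obtain ⟨p, hp⟩ := hG.exists_walk_length_eq_dist a b
    have hadj1 : (corona G H).Adj (Sum.inr (a, u)) (Sum.inl a) := rfl
    have hadj2 : (corona G H).Adj (Sum.inl b) (Sum.inr (b, w)) := rfl
    let q : (corona G H).Walk (Sum.inl a) (Sum.inl b) := p.map (coronaHom G H)
    have hq : q.length = p.length := SimpleGraph.Walk.length_map _ _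
    have := SimpleGraph.dist_le ((q.concat hadj2).cons hadj1)
    simp only [SimpleGraph.Walk.length_cons, SimpleGraph.Walk.length_concat,
      hq, hp] at this
    omega
  · obtain ⟨p, hp⟩ := (corona_connected hG).exists_walk_length_eq_dist
      (Sum.inr (a, u) : V ⊕ V × W) (Sum.inr (b, w))
    have := walk_lipschitz_bound _ (hLip hG b) p
    simpa [hp, hab] using this

lemma corona_dist_inr_same_le (a : V) (u w : W) :
    (corona G H).dist (Sum.inr (a, u)) (Sum.inr (a, w)) ≤ 2 := by
  have hadj1 : (corona G H).Adj (Sum.inr (a, u)) (Sum.inl a) := rfl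
  have hadj2 : (corona G H).Adj (Sum.inl a) (Sum.inr (a, w)) := rfl
  simpa using SimpleGraph.dist_le (SimpleGraph.Walk.cons hadj1 hadj2.toWalk)

end Corona
section MainProof

open SimpleGraph

variable [Fintype V] [Fintype W] [Nonempty W] {G : SimpleGraph V} {H : SimpleGraph W}

lemma corona_dist_inr_inl' (hG : G.Connected) (a b : V) (w : W) :
    (corona G H).dist (Sum.inr (b, w)) (Sum.inl a) = G.dist b a + 1 := by
  rw [SimpleGraph.dist_comm, corona_dist_inl_inr hG, SimpleGraph.dist_comm]

/-- Nonadjacent distinct vertices of the empty bisector graph have a common equidistant vertex. -/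
lemma bis_nonempty {i j : V} (hij : i ≠ j) (h : ¬ (emptyBisector G).Adj i j) :
    ∃ k, G.dist k i = G.dist k j := by
  by_contra hk
  push_neg at hk
  exact h (show i ≠ j ∧ bisector G i j = ∅ from
    ⟨hij, Set.eq_empty_iff_forall_notMem.mpr fun w hw => hk w hw⟩)

lemma adj_bis_empty {i j : V} (h : (emptyBisector G).Adj i j) :
    ∀ k, G.dist k i ≠ G.dist k j := fun k hk =>
  Set.eq_empty_iff_forall_notMem.mp h.2 k hk

section WithParts

variable (hG : G.Connected) (A B : Set V) (hUnion : A ∪ B = Set.univ) (hDisj : Disjoint A B)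
    (hAdj : ∀ x y : V, (emptyBisector G).Adj x y ↔
      ((x ∈ A ∧ y ∈ B) ∨ (x ∈ B ∧ y ∈ A)))

include hUnion in
lemma mem_B_of_not_A {v : V} (h : v ∉ A) : v ∈ B := by
  have h2 : v ∈ A ∪ B := hUnion ▸ Set.mem_univ v
  rcases h2 with h' | h'
  · exact absurd h' h
  · exact h'

include hG hUnion hDisj hAdj in
/-- The canonical construction is a distance-equalizer set of the corona. -/
lemma construction_isDistEq :
    IsDistEqSet (corona G H)
      (Sum.inl '' A ∪ Sum.inr '' (B ×ˢ (Set.univ : Set W))) := by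
  classical
  intro x y hx hy hxy
  set S : Set (V ⊕ V × W) := Sum.inl '' A ∪ Sum.inr '' (B ×ˢ (Set.univ : Set W)) with hSdef
  have hmemA : ∀ i : V, Sum.inl i ∉ S → i ∈ B := by
    intro i hi
    refine mem_B_of_not_A A B hUnion fun hiA => hi (Or.inl ⟨i, hiA, rfl⟩)
  have hmemB : ∀ (i : V) (w : W), Sum.inr (i, w) ∉ S → i ∈ A := by
    intro i w hi
    by_contra hiA
    have hiB : i ∈ B := mem_B_of_not_A A B hUnion hiA
    exact (fun hiA' => hi (Or.inr ⟨(i, w), ⟨hiB, trivial⟩, rfl⟩)) hiA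
  have hnotB : ∀ v : V, v ∈ A → v ∉ B := fun v hv => Set.disjoint_left.mp hDisj hv
  have w₀ : W := Classical.arbitrary W
  -- helper for equidistant k
  have useEq : ∀ k i j : V, G.dist k i = G.dist k j →
      ∃ s ∈ S, (corona G H).dist s (Sum.inl i) = (corona G H).dist s (Sum.inl j) := by
    intro k i j hk
    by_cases hkA : k ∈ A
    · exact ⟨Sum.inl k, Or.inl ⟨k, hkA, rfl⟩, by
        rw [corona_dist_inl_inl hG, corona_dist_inl_inl hG, hk]⟩
    · refine ⟨Sum.inr (k, w₀), Or.inr ⟨(k, w₀), ⟨mem_B_of_not_A A B hUnion hkA, trivial⟩, rfl⟩, ?_⟩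
      rw [corona_dist_inr_inl' hG, corona_dist_inr_inl' hG, hk]
  have useEqLeaf : ∀ k i j : V, i ∈ A → j ∈ A → G.dist k i = G.dist k j →
      ∀ w w' : W, ∃ s ∈ S,
        (corona G H).dist s (Sum.inr (i, w)) = (corona G H).dist s (Sum.inr (j, w')) := by
    intro k i j hiA hjA hk w w'
    by_cases hkA : k ∈ A
    · exact ⟨Sum.inl k, Or.inl ⟨k, hkA, rfl⟩, by
        rw [corona_dist_inl_inr hG, corona_dist_inl_inr hG, hk]⟩
    · have hkB : k ∈ B := mem_B_of_not_A A B hUnion hkA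
      have hki : k ≠ i := fun h => (hnotB i hiA) (h ▸ hkB)
      have hkj : k ≠ j := fun h => (hnotB j hjA) (h ▸ hkB)
      refine ⟨Sum.inr (k, w₀), Or.inr ⟨(k, w₀), ⟨hkB, trivial⟩, rfl⟩, ?_⟩
      rw [corona_dist_inr_inr hG hki, corona_dist_inr_inr hG hkj, hk]
  -- the mixed (hub in B, leaf in A) case
  have useMixed : ∀ i j : V, i ∈ B → j ∈ A → ∀ w : W, ∃ s ∈ S,
      (corona G H).dist s (Sum.inl i) = (corona G H).dist s (Sum.inr (j, w)) := by
    intro i j hiB hjA w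
    have hij : j ≠ i := fun h => (hnotB j hjA) (h ▸ hiB)
    have hadj : (emptyBisector G).Adj i j := (hAdj i j).mpr (Or.inr ⟨hiB, hjA⟩)
    have hbis : ∀ k, G.dist k j ≠ G.dist k i := fun k hk =>
      adj_bis_empty hadj k hk.symm
    obtain ⟨k, hk⟩ := exists_dist_succ hG hij hbis
    by_cases hkA : k ∈ A
    · exact ⟨Sum.inl k, Or.inl ⟨k, hkA, rfl⟩, by
        rw [corona_dist_inl_inl hG, corona_dist_inl_inr hG, hk]⟩
    · have hkB : k ∈ B := mem_B_of_not_A A B hUnion hkA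
      have hkj : k ≠ j := fun h => (hnotB j hjA) (h ▸ hkB)
      refine ⟨Sum.inr (k, w₀), Or.inr ⟨(k, w₀), ⟨hkB, trivial⟩, rfl⟩, ?_⟩
      rw [corona_dist_inr_inl' hG, corona_dist_inr_inr hG hkj, hk]
  obtain (i | ⟨i, w⟩) := x <;> obtain (j | ⟨j, w'⟩) := y
  · -- hub-hub : both in B
    have hiB := hmemA i hx
    have hjB := hmemA j hy
    have hij : i ≠ j := fun h => hxy (by rw [h])
    have hnadj : ¬ (emptyBisector G).Adj i j := by
      rw [hAdj]
      rintro (⟨hiA, -⟩ | ⟨-, hjA⟩)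
      · exact hnotB i hiA hiB
      · exact hnotB j hjA hjB
    obtain ⟨k, hk⟩ := bis_nonempty hij hnadj
    exact useEq k i j hk
  · exact useMixed i j (hmemA i hx) (hmemB j w' hy) w'
  · obtain ⟨s, hs, hd⟩ := useMixed j i (hmemA j hy) (hmemB i w hx) w
    exact ⟨s, hs, hd.symm⟩
  · -- leaf-leaf : both copies in A
    have hiA := hmemB i w hx
    have hjA := hmemB j w' hy
    by_cases hij : i = j
    · subst hij
      refine ⟨Sum.inl i, Or.inl ⟨i, hiA, rfl⟩, ?_⟩
      rw [corona_dist_inl_inr hG, corona_dist_inl_inr hG]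
    · have hnadj : ¬ (emptyBisector G).Adj i j := by
        rw [hAdj]
        rintro (⟨hiA', hjB⟩ | ⟨hiB, -⟩)
        · exact hnotB j hjA hjB
        · exact hnotB i hiA hiB
      obtain ⟨k, hk⟩ := bis_nonempty hij hnadj
      exact useEqLeaf k i j hiA hjA hk w w'

include hUnion in
lemma construction_ncard :
    (Sum.inl '' A ∪ Sum.inr '' (B ×ˢ (Set.univ : Set W)) : Set (V ⊕ V × W)).ncard =
      A.ncard + B.ncard * Fintype.card W := by
  classical
  rw [Set.ncard_union_eq]
  · rw [Set.ncard_image_of_injective _ Sum.inl_injective,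
      Set.ncard_image_of_injective _ Sum.inr_injective]
    congr 1
    rw [Set.ncard_eq_toFinset_card', Set.toFinset_prod, Finset.card_product,
      Set.toFinset_univ, Finset.card_univ, Set.ncard_eq_toFinset_card']
  · rw [Set.disjoint_left]
    rintro x ⟨a, -, rfl⟩ ⟨p, -, hp⟩
    exact Sum.inl_ne_inr hp.symm

include hDisj hAdj in
lemma cover_lb {C : Set V} (hC : _root_.IsVertexCover (emptyBisector G) C) :
    min A.ncard B.ncard ≤ C.ncard := by
  by_cases hA : A ⊆ C
  · exact le_trans (min_le_left _ _) (Set.ncard_le_ncard hA C.toFinite)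
  · refine le_trans (min_le_right _ _) (Set.ncard_le_ncard ?_ C.toFinite)
    obtain ⟨a, haA, haC⟩ := Set.not_subset.mp hA
    intro b hbB
    rcases hC ((hAdj a b).mpr (Or.inl ⟨haA, hbB⟩)) with h | h
    · exact absurd h haC
    · exact h

include hG hUnion hDisj hAdj in
/-- Lower bound for any distance-equalizer set of the corona. -/
lemma eqdim_corona_lower {S : Set (V ⊕ V × W)} (hS : IsDistEqSet (corona G H) S) :
    min A.ncard B.ncard * Fintype.card W + max A.ncard B.ncard ≤ S.ncard := by
  classical
  set C : Set V := {i | ∀ w : W, Sum.inr (i, w) ∈ S} with hCdef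
  -- C is a vertex cover of the empty bisector graph
  have hCover : _root_.IsVertexCover (emptyBisector G) C := by
    intro a b hab
    by_contra hcon
    push_neg at hcon
    obtain ⟨haC, hbC⟩ := hcon
    simp only [hCdef, Set.mem_setOf_eq, not_forall] at haC hbC
    obtain ⟨w, hw⟩ := haC
    obtain ⟨w', hw'⟩ := hbC
    have hne : (Sum.inr (a, w) : V ⊕ V × W) ≠ Sum.inr (b, w') := by
      simp only [ne_eq, Sum.inr.injEq, Prod.mk.injEq, not_and]
      intro h; exact absurd h hab.1
    obtain ⟨s, hsS, hd⟩ := hS hw hw' hne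
    have hdpos : 1 ≤ G.dist a b := hG.pos_dist_of_ne hab.1
    obtain (k | ⟨k, u⟩) := s
    · rw [corona_dist_inl_inr hG, corona_dist_inl_inr hG] at hd
      exact adj_bis_empty hab k (by omega)
    · by_cases hka : k = a
      · subst hka
        rw [corona_dist_inr_inr hG hab.1] at hd
        have := corona_dist_inr_same_le (G := G) (H := H) k u w
        omega
      · by_cases hkb : k = b
        · subst hkb
          rw [corona_dist_inr_inr hG (fun h => hab.1 h.symm),
            SimpleGraph.dist_comm] at hd
          have := corona_dist_inr_same_le (G := G) (H := H) k u w'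
          omega
        · rw [corona_dist_inr_inr hG hka, corona_dist_inr_inr hG hkb] at hd
          exact adj_bis_empty hab k (by omega)
  have hmin : min A.ncard B.ncard ≤ C.ncard := cover_lb A B hDisj hAdj hCover
  -- fiberwise counting
  set q : V ⊕ V × W → V := Sum.elim id Prod.fst with hqdef
  have hcard : S.ncard = S.toFinset.card := Set.ncard_eq_toFinset_card' S
  have hsum : S.toFinset.card =
      ∑ i : V, (S.toFinset.filter (fun x => q x = i)).card :=
    Finset.card_eq_sum_card_fiberwise (fun x _ => Finset.mem_univ _)
  have hfib1 : ∀ i ∈ C, Fintype.card W ≤ (S.toFinset.filter (fun x => q x = i)).card := by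
    intro i hi
    rw [← Finset.card_univ]
    refine Finset.card_le_card_of_injOn (fun w => Sum.inr (i, w)) ?_ ?_
    · intro w _
      simp only [Finset.coe_filter, Finset.mem_coe, Finset.mem_filter, Set.mem_toFinset,
        Set.mem_setOf_eq]
      exact ⟨hi w, rfl⟩
    · intro w _ w' _ h
      simpa using h
  have hfib2 : ∀ i : V, i ∉ C → 1 ≤ (S.toFinset.filter (fun x => q x = i)).card := by
    intro i hi
    rw [Nat.one_le_iff_ne_zero, ne_eq, Finset.card_eq_zero, ← ne_eq,
      ← Finset.nonempty_iff_ne_empty]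
    simp only [hCdef, Set.mem_setOf_eq, not_forall] at hi
    obtain ⟨w, hw⟩ := hi
    by_cases hI : Sum.inl i ∈ S
    · exact ⟨Sum.inl i, by simp [Set.mem_toFinset, hI, hqdef]⟩
    · have hne : (Sum.inl i : V ⊕ V × W) ≠ Sum.inr (i, w) := Sum.inl_ne_inr
      obtain ⟨s, hsS, hd⟩ := hS hI hw hne
      obtain (k | ⟨k, u⟩) := s
      · rw [corona_dist_inl_inl hG, corona_dist_inl_inr hG] at hd
        omega
      · by_cases hki : k = i
        · subst hki
          exact ⟨Sum.inr (k, u), by simp [Set.mem_toFinset, hsS, hqdef]⟩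
        · rw [corona_dist_inr_inl' hG, corona_dist_inr_inr hG hki] at hd
          omega
  -- assemble
  have hsplit := Finset.sum_filter_add_sum_filter_not Finset.univ (fun i => i ∈ C)
    (fun i => (S.toFinset.filter (fun x => q x = i)).card)
  have hC1 : (Finset.univ.filter (fun i => i ∈ C)).card • Fintype.card W ≤
      ∑ i ∈ Finset.univ.filter (fun i => i ∈ C),
        (S.toFinset.filter (fun x => q x = i)).card :=
    Finset.card_nsmul_le_sum _ _ _ (fun i hi => hfib1 i (Finset.mem_filter.mp hi).2)
  have hC2 : (Finset.univ.filter (fun i => ¬ i ∈ C)).card • 1 ≤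
      ∑ i ∈ Finset.univ.filter (fun i => ¬ i ∈ C),
        (S.toFinset.filter (fun x => q x = i)).card :=
    Finset.card_nsmul_le_sum _ _ _ (fun i hi => hfib2 i (Finset.mem_filter.mp hi).2)
  have hCc : (Finset.univ.filter (fun i => i ∈ C)).card = C.ncard := by
    rw [Set.ncard_eq_toFinset_card']
    congr 1
    ext i
    simp [Set.mem_toFinset]
  have hCsplit : (Finset.univ.filter (fun i => i ∈ C)).card +
      (Finset.univ.filter (fun i => ¬ i ∈ C)).card = Fintype.card V :=
    Finset.card_filter_add_card_filter_not _
  -- cardinal identities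
  have hAB : A.ncard + B.ncard = Fintype.card V := by
    rw [← Set.ncard_union_eq hDisj A.toFinite B.toFinite, hUnion, Set.ncard_univ,
      Nat.card_eq_fintype_card]
  have hminmax : min A.ncard B.ncard + max A.ncard B.ncard = Fintype.card V := by
    rw [min_add_max, hAB]
  have hWpos : 1 ≤ Fintype.card W := Fintype.card_pos
  simp only [smul_eq_mul] at hC1 hC2
  -- arithmetic
  have key : ∀ mn mx : ℕ, mn ≤ C.ncard → mn + mx = Fintype.card V →
      mn * Fintype.card W + mx ≤ S.ncard := by
    intro mn mx h1 h2
    obtain ⟨d, hdd⟩ : ∃ d, C.ncard = mn + d := ⟨C.ncard - mn, by omega⟩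
    rw [hCc, hdd] at hC1
    have hmul : (mn + d) * Fintype.card W =
        mn * Fintype.card W + d * Fintype.card W := by ring
    rw [hmul] at hC1
    have hdW : d ≤ d * Fintype.card W := Nat.le_mul_of_pos_right d (by omega)
    omega
  exact key _ _ hmin hminmax

include hDisj hAdj in
lemma vcNum_emptyBisector_eq :
    vcNum (emptyBisector G) = min A.ncard B.ncard := by
  have hmem : min A.ncard B.ncard ∈
      {n | ∃ C : Set V, _root_.IsVertexCover (emptyBisector G) C ∧ C.ncard = n} := by
    rcases le_total A.ncard B.ncard with h | h
    · refine ⟨A, ?_, (min_eq_left h).symm⟩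
      intro x y hxy
      rcases (hAdj x y).mp hxy with ⟨hx, -⟩ | ⟨-, hy⟩
      · exact Or.inl hx
      · exact Or.inr hy
    · refine ⟨B, ?_, (min_eq_right h).symm⟩
      intro x y hxy
      rcases (hAdj x y).mp hxy with ⟨-, hy⟩ | ⟨hx, -⟩
      · exact Or.inr hy
      · exact Or.inl hx
  refine le_antisymm (Nat.sInf_le hmem) (le_csInf ⟨_, hmem⟩ ?_)
  rintro n ⟨C, hC, rfl⟩
  exact cover_lb A B hDisj hAdj hC

include hUnion hDisj hAdj in
lemma indepNum_emptyBisector_eq :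
    _root_.indepNum (emptyBisector G) = max A.ncard B.ncard := by
  have hnotB : ∀ v : V, v ∈ A → v ∉ B := fun v hv => Set.disjoint_left.mp hDisj hv
  have hub : ∀ n ∈ {n | ∃ I : Set V, _root_.IsIndepSet (emptyBisector G) I ∧ I.ncard = n},
      n ≤ max A.ncard B.ncard := by
    rintro n ⟨I, hI, rfl⟩
    by_cases hIA : I ⊆ A
    · exact le_trans (Set.ncard_le_ncard hIA A.toFinite) (le_max_left _ _)
    · obtain ⟨b, hbI, hbA⟩ := Set.not_subset.mp hIA
      have hbB : b ∈ B := mem_B_of_not_A A B hUnion hbA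
      have hsub : I ⊆ B := by
        intro x hx
        by_contra hxB
        have hx2 : x ∈ A ∪ B := hUnion ▸ Set.mem_univ x
        have hxA : x ∈ A := by
          rcases hx2 with h' | h'
          · exact h'
          · exact absurd h' hxB
        exact hI hx hbI ((hAdj x b).mpr (Or.inl ⟨hxA, hbB⟩))
      exact le_trans (Set.ncard_le_ncard hsub B.toFinite) (le_max_right _ _)
  have hmem : max A.ncard B.ncard ∈
      {n | ∃ I : Set V, _root_.IsIndepSet (emptyBisector G) I ∧ I.ncard = n} := by
    rcases le_total A.ncard B.ncard with h | h
    · refine ⟨B, ?_, (max_eq_right h).symm⟩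
      intro x y hx hy hxy
      rcases (hAdj x y).mp hxy with ⟨hxA, -⟩ | ⟨-, hyA⟩
      · exact hnotB x hxA hx
      · exact hnotB y hyA hy
    · refine ⟨A, ?_, (max_eq_left h).symm⟩
      intro x y hx hy hxy
      rcases (hAdj x y).mp hxy with ⟨-, hyB⟩ | ⟨hxB, -⟩
      · exact hnotB y hy hyB
      · exact hnotB x hx hxB
  exact le_antisymm (csSup_le ⟨_, hmem⟩ hub) (le_csSup ⟨_, hub⟩ hmem)

include hG hUnion hDisj hAdj in
lemma eqdim_corona_eq :
    eqdim (corona G H) = min A.ncard B.ncard * Fintype.card W + max A.ncard B.ncard := by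
  have hmem : min A.ncard B.ncard * Fintype.card W + max A.ncard B.ncard ∈
      {n | ∃ S : Set (V ⊕ V × W), IsDistEqSet (corona G H) S ∧ S.ncard = n} := by
    rcases le_total B.ncard A.ncard with h | h
    · refine ⟨_, construction_isDistEq hG A B hUnion hDisj hAdj, ?_⟩
      rw [construction_ncard A B hUnion, min_eq_right h, max_eq_left h]
      omega
    · refine ⟨_, construction_isDistEq hG B A (by rw [Set.union_comm]; exact hUnion)
        hDisj.symm (fun x y => (hAdj x y).trans or_comm), ?_⟩
      rw [construction_ncard B A (by rw [Set.union_comm]; exact hUnion),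
        min_eq_left h, max_eq_right h]
      omega
  refine le_antisymm (Nat.sInf_le hmem) (le_csInf ⟨_, hmem⟩ ?_)
  rintro n ⟨S, hS, rfl⟩
  exact eqdim_corona_lower hG A B hUnion hDisj hAdj hS

end WithParts

end MainProof


/-- If the empty bisector graph `Ĝ` is complete bipartite (its vertex set
splits into two disjoint sets covering it, with adjacency exactly between the two parts),
then `ξ(G ⊙ H) = β(Ĝ)·n(H) + α(Ĝ)`. -/
theorem eqdim_corona_of_emptyBisector_completeBipartite [Fintype V] [Fintype W] [Nonempty W]
    (G : SimpleGraph V) (H : SimpleGraph W) (hG : G.Connected)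
    (A B : Set V) (hUnion : A ∪ B = Set.univ) (hDisj : Disjoint A B)
    (hAdj : ∀ x y : V, (emptyBisector G).Adj x y ↔
      ((x ∈ A ∧ y ∈ B) ∨ (x ∈ B ∧ y ∈ A))) :
    eqdim (corona G H) =
      vcNum (emptyBisector G) * Fintype.card W + indepNum (emptyBisector G) := by
  rw [vcNum_emptyBisector_eq A B hDisj hAdj, indepNum_emptyBisector_eq A B hUnion hDisj hAdj]
  exact eqdim_corona_eq hG A B hUnion hDisj hAdj
end

section
/- For any finite simple connected graph G there exists a natural number k(G) with α(Ĝ) + β*(G) ≤ k(G) ≤ n(G) such that: (a) ξ(G⊙H) = β(Ĝ)·n(H) + k(G) for every finite simple graph H with n(H) > min{ α(Ĝ), β(Ĝ) − β*(G) + 1 }, and (b) ξ(G⊙H) ≤ β(Ĝ)·n(H) + k(G) for every finite simple graph H with n(H) ≤ min{ α(Ĝ), β(Ĝ) − β*(G) + 1 }. -/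
universe u v

variable {V : Type u} {W : Type v}

open Set
open SimpleGraph hiding IsVertexCover IsIndepSet indepNum

namespace CoronaAux

open scoped Classical

variable {G : SimpleGraph V} {H : SimpleGraph W}

lemma adj_inl_inl {a b : V} : (corona G H).Adj (Sum.inl a) (Sum.inl b) ↔ G.Adj a b := Iff.rfl

lemma adj_inl_inr {a : V} {p : V × W} : (corona G H).Adj (Sum.inl a) (Sum.inr p) ↔ a = p.1 :=
  Iff.rfl

lemma adj_inr_inl {a : V} {p : V × W} : (corona G H).Adj (Sum.inr p) (Sum.inl a) ↔ a = p.1 :=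
  Iff.rfl

lemma adj_inr_inr {p q : V × W} :
    (corona G H).Adj (Sum.inr p) (Sum.inr q) ↔ p.1 = q.1 ∧ H.Adj p.2 q.2 := Iff.rfl

/-- The inclusion of `G` into the corona as a graph homomorphism. -/
def inlHom (G : SimpleGraph V) (H : SimpleGraph W) : G →g corona G H :=
  ⟨Sum.inl, fun h => h⟩

lemma corona_connected (hG : G.Connected) : (corona G H).Connected := by
  have hne : Nonempty V := hG.nonempty
  have key : ∀ a b : V, (corona G H).Reachable (Sum.inl a) (Sum.inl b) := fun a b =>
    (hG a b).map (inlHom G H)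
  have base : ∀ x : V ⊕ V × W, (corona G H).Reachable x (Sum.inl (Sum.elim id Prod.fst x)) := by
    rintro (a | ⟨a, u⟩)
    · exact Reachable.refl _
    · exact (Adj.reachable (by exact rfl))
  constructor
  · intro x y
    exact (base x).trans ((key _ _).trans (base y).symm)

lemma lip_le_length {α : Type*} {D : SimpleGraph α} {t : α → ℕ} {z : α} (h0 : t z = 0)
    (hl : ∀ ⦃x y⦄, D.Adj x y → t x ≤ t y + 1) :
    ∀ {x : α} (p : D.Walk x z), t x ≤ p.length := by
  intro x p
  induction p with
  | nil => simp [h0]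
  | @cons a b c h p ih =>
    calc t a ≤ t b + 1 := hl h
    _ ≤ p.length + 1 := by omega
    _ = (Walk.cons h p).length := (Walk.length_cons _ _).symm

lemma lip_le_dist {α : Type*} {D : SimpleGraph α} {t : α → ℕ} {z x : α} (h0 : t z = 0)
    (hl : ∀ ⦃x y⦄, D.Adj x y → t x ≤ t y + 1) (hr : D.Reachable x z) :
    t x ≤ D.dist x z := by
  obtain ⟨p, hp⟩ := hr.exists_walk_length_eq_dist
  exact hp ▸ lip_le_length h0 hl p

variable (hG : G.Connected)
include hG

lemma adj_dist_succ {a b j : V} (h : G.Adj a b) : G.dist a j ≤ G.dist b j + 1 := by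
  have h1 : G.dist a b ≤ 1 := by
    have := SimpleGraph.dist_le (Walk.cons h Walk.nil)
    simpa using this
  calc G.dist a j ≤ G.dist a b + G.dist b j := hG.dist_triangle
  _ ≤ G.dist b j + 1 := by omega

/-- Target function for distance to `Sum.inl j`. -/
private noncomputable def tInl (G : SimpleGraph V) (j : V) : V ⊕ V × W → ℕ :=
  Sum.elim (fun a => G.dist a j) (fun p => G.dist p.1 j + 1)

lemma tInl_lip {j : V} :
    ∀ ⦃x y : V ⊕ V × W⦄, (corona G H).Adj x y → tInl G j x ≤ tInl G j y + 1 := by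
  rintro (a | ⟨a, u⟩) (b | ⟨b, u'⟩) h
  · exact adj_dist_succ hG h
  · obtain rfl : a = b := h
    simp only [tInl, Sum.elim_inl, Sum.elim_inr]; omega
  · obtain rfl : b = a := h
    simp only [tInl, Sum.elim_inl, Sum.elim_inr]; omega
  · obtain rfl : a = b := h.1
    simp only [tInl, Sum.elim_inl, Sum.elim_inr]; omega

lemma dist_inl_inl (a j : V) : (corona G H).dist (Sum.inl a) (Sum.inl j) = G.dist a j := by
  refine le_antisymm ?_ ?_
  · obtain ⟨p, hp⟩ := hG.exists_walk_length_eq_dist a j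
    have := SimpleGraph.dist_le (p.map (inlHom G H))
    rw [Walk.length_map, hp] at this; exact this
  · have := lip_le_dist (D := corona G H) (t := tInl G j) (by simp [tInl]) (tInl_lip hG)
      ((corona_connected hG) (Sum.inl a) (Sum.inl j))
    simpa [tInl] using this

lemma dist_inr_inl (a j : V) (u : W) :
    (corona G H).dist (Sum.inr (a, u)) (Sum.inl j) = G.dist a j + 1 := by
  refine le_antisymm ?_ ?_
  · obtain ⟨p, hp⟩ := hG.exists_walk_length_eq_dist a j
    have hadj : (corona G H).Adj (Sum.inr (a, u)) (Sum.inl a) := rfl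
    have := SimpleGraph.dist_le (Walk.cons hadj (p.map (inlHom G H)))
    have h' : _ ≤ (p.map (inlHom G H)).length + 1 := this
    rw [Walk.length_map, hp] at h'; exact h'
  · have := lip_le_dist (D := corona G H) (t := tInl G j) (by simp [tInl]) (tInl_lip hG)
      ((corona_connected hG) (Sum.inr (a, u)) (Sum.inl j))
    simpa [tInl] using this

lemma dist_inl_inr (l j : V) (w : W) :
    (corona G H).dist (Sum.inl l) (Sum.inr (j, w)) = G.dist l j + 1 := by
  rw [SimpleGraph.dist_comm, dist_inr_inl hG, G.dist_comm]

/-- Target function for distance to `Sum.inr (j, w)`. -/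
private noncomputable def tInr (G : SimpleGraph V) (H : SimpleGraph W) (j : V) (w : W) :
    V ⊕ V × W → ℕ :=
  Sum.elim (fun a => G.dist a j + 1)
    (fun p => if p.1 = j then (if p.2 = w then 0 else if H.Adj p.2 w then 1 else 2)
      else G.dist p.1 j + 2)

lemma tInr_lip {j : V} {w : W} :
    ∀ ⦃x y : V ⊕ V × W⦄, (corona G H).Adj x y → tInr G H j w x ≤ tInr G H j w y + 1 := by
  rintro (a | ⟨a, u⟩) (b | ⟨b, u'⟩) h
  · have := adj_dist_succ hG (j := j) h
    simp only [tInr, Sum.elim_inl]; omega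
  · obtain rfl : a = b := h
    show G.dist a j + 1 ≤
      (if a = j then (if u' = w then 0 else if H.Adj u' w then 1 else 2)
        else G.dist a j + 2) + 1
    by_cases ha : a = j
    · have h0 : G.dist a j = 0 := by rw [ha]; exact SimpleGraph.dist_self
      rw [if_pos ha]
      split_ifs <;> omega
    · rw [if_neg ha]; omega
  · obtain rfl : b = a := h
    show (if b = j then (if u = w then 0 else if H.Adj u w then 1 else 2)
        else G.dist b j + 2) ≤ (G.dist b j + 1) + 1
    by_cases ha : b = j
    · rw [if_pos ha]
      split_ifs <;> omega
    · rw [if_neg ha]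
  · obtain rfl : a = b := h.1
    have hadj : H.Adj u u' := h.2
    show (if a = j then (if u = w then 0 else if H.Adj u w then 1 else 2)
        else G.dist a j + 2) ≤
      (if a = j then (if u' = w then 0 else if H.Adj u' w then 1 else 2)
        else G.dist a j + 2) + 1
    by_cases ha : a = j
    · rw [if_pos ha, if_pos ha]
      by_cases hu : u = w
      · rw [if_pos hu]; omega
      · rw [if_neg hu]
        by_cases hu' : u' = w
        · rw [if_pos hu', if_pos (hu' ▸ hadj)]
        · rw [if_neg hu']
          split_ifs <;> omega
    · rw [if_neg ha, if_neg ha]; omega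

lemma dist_to_inr_ge (x : V ⊕ V × W) (j : V) (w : W) :
    tInr G H j w x ≤ (corona G H).dist x (Sum.inr (j, w)) := by
  refine lip_le_dist (D := corona G H) (t := tInr G H j w) ?_ (tInr_lip hG)
    ((corona_connected hG) x (Sum.inr (j, w)))
  simp [tInr]

lemma dist_inr_inr_ne {a j : V} (hne : a ≠ j) (u w : W) :
    (corona G H).dist (Sum.inr (a, u)) (Sum.inr (j, w)) = G.dist a j + 2 := by
  refine le_antisymm ?_ ?_
  · obtain ⟨p, hp⟩ := hG.exists_walk_length_eq_dist a j
    have h1 : (corona G H).Adj (Sum.inr (a, u)) (Sum.inl a) := rfl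
    have h2 : (corona G H).Adj (Sum.inl j) (Sum.inr (j, w)) := rfl
    have := SimpleGraph.dist_le (Walk.cons h1 ((p.map (inlHom G H)).concat h2))
    have hc := Walk.length_concat (p.map (inlHom G H)) h2
    have h' : _ ≤ ((p.map (inlHom G H)).concat h2).length + 1 := this
    rw [hc, Walk.length_map, hp] at h'
    omega
  · have := dist_to_inr_ge (H := H) hG (Sum.inr (a, u)) j w
    simpa [tInr, hne] using this

lemma dist_inr_inr_same (j : V) (u w : W) :
    (corona G H).dist (Sum.inr (j, u)) (Sum.inr (j, w)) =
      if u = w then 0 else if H.Adj u w then 1 else 2 := by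
  have hlow := dist_to_inr_ge (H := H) hG (Sum.inr (j, u)) j w
  simp only [tInr, Sum.elim_inr, if_pos rfl] at hlow
  by_cases hu : u = w
  · subst hu; simp [SimpleGraph.dist_self]
  · rw [if_neg hu] at hlow ⊢
    by_cases hadj : H.Adj u w
    · rw [if_pos hadj] at hlow ⊢
      refine le_antisymm ?_ hlow
      have h1 : (corona G H).Adj (Sum.inr (j, u)) (Sum.inr (j, w)) := ⟨rfl, hadj⟩
      have := SimpleGraph.dist_le (Walk.cons h1 Walk.nil)
      simpa using this
    · rw [if_neg hadj] at hlow ⊢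
      refine le_antisymm ?_ hlow
      have h1 : (corona G H).Adj (Sum.inr (j, u)) (Sum.inl j) := rfl
      have h2 : (corona G H).Adj (Sum.inl j) (Sum.inr (j, w)) := rfl
      have := SimpleGraph.dist_le (Walk.cons h1 (Walk.cons h2 Walk.nil))
      simpa using this

omit hG

section Combinatorics

/-- The candidate distance-equalizer set for the corona. -/
def copySet (C T : Set V) : Set (V ⊕ V × W) :=
  Sum.inl '' T ∪ Sum.inr '' (C ×ˢ (Set.univ : Set W))

lemma mem_copySet_inl {C T : Set V} {i : V} : Sum.inl i ∈ copySet (W := W) C T ↔ i ∈ T := by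
  simp [copySet]

lemma mem_copySet_inr {C T : Set V} {p : V × W} : Sum.inr p ∈ copySet C T ↔ p.1 ∈ C := by
  simp [copySet]

variable [Fintype V] [Fintype W]

lemma ncard_prod_univ (C : Set V) :
    (C ×ˢ (Set.univ : Set W)).ncard = C.ncard * Fintype.card W := by
  rw [← Nat.card_coe_set_eq, Nat.card_congr (Equiv.Set.prod _ _), Nat.card_prod,
    Nat.card_coe_set_eq, Nat.card_congr (Equiv.Set.univ W), Nat.card_eq_fintype_card]

lemma ncard_copySet (C T : Set V) :
    (copySet (W := W) C T).ncard = C.ncard * Fintype.card W + T.ncard := by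
  have hdisj : Disjoint (Sum.inl '' T) (Sum.inr '' (C ×ˢ (Set.univ : Set W))) := by
    rw [Set.disjoint_left]
    rintro x ⟨i, _, rfl⟩ ⟨q, _, h⟩
    exact absurd h (by simp)
  rw [copySet, Set.ncard_union_eq hdisj (Set.toFinite _) (Set.toFinite _),
    Set.ncard_image_of_injective _ Sum.inl_injective,
    Set.ncard_image_of_injective _ Sum.inr_injective, ncard_prod_univ]
  omega

end Combinatorics

section Upper

variable [Nonempty W]
include hG

lemma notAdj_bisector {X : Set V} (hX : IsVertexCover (emptyBisector G) X) {i j : V}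
    (hne : i ≠ j) (hi : i ∉ X) (hj : j ∉ X) : ∃ l, G.dist l i = G.dist l j := by
  by_contra hcon
  push_neg at hcon
  have hadj : (emptyBisector G).Adj i j :=
    ⟨hne, Set.eq_empty_iff_forall_notMem.mpr fun l hl => hcon l hl⟩
  rcases hX hadj with h | h
  · exact hi h
  · exact hj h

variable {C T : Set V} (hC : IsVertexCover (emptyBisector G) C)
  (hT : IsVertexCover (emptyBisector G) T) (hF : IsForwardEqualizedPair G C T)

include hF in
lemma upper_mixed {i j : V} {w : W} (hi : i ∉ T) (hj : j ∉ C) :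
    ∃ z ∈ copySet (W := W) C T,
      (corona G H).dist z (Sum.inl i) = (corona G H).dist z (Sum.inr (j, w)) := by
  have hUnion : ∀ l : V, l ∈ C ∨ l ∈ T := fun l =>
    (Set.eq_univ_iff_forall.mp hF.1 l : l ∈ C ∪ T)
  have w₀ : W := Classical.arbitrary W
  have hiC : i ∈ C := (hUnion i).resolve_right hi
  have hjT : j ∈ T := (hUnion j).resolve_left hj
  obtain ⟨l, hl⟩ := hF.2 ⟨hiC, hi⟩ ⟨hjT, hj⟩
  by_cases hlT : l ∈ T
  · exact ⟨Sum.inl l, mem_copySet_inl.mpr hlT,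
      by rw [dist_inl_inl hG, dist_inl_inr hG, hl]⟩
  · have hlC : l ∈ C := (hUnion l).resolve_right hlT
    have hlj : l ≠ j := fun h => hj (h ▸ hlC)
    refine ⟨Sum.inr (l, w₀), mem_copySet_inr.mpr hlC, ?_⟩
    rw [dist_inr_inl hG, dist_inr_inr_ne hG hlj, hl]

include hC hT hF in
theorem upper_isDistEqSet : IsDistEqSet (corona G H) (copySet (W := W) C T) := by
  have hUnion : ∀ l : V, l ∈ C ∨ l ∈ T := fun l =>
    (Set.eq_univ_iff_forall.mp hF.1 l : l ∈ C ∪ T)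
  have w₀ : W := Classical.arbitrary W
  rintro (i | ⟨j, w⟩) (i' | ⟨j', w'⟩) hx hy hxy
  · rw [mem_copySet_inl] at hx hy
    have hne : i ≠ i' := fun h => hxy (congrArg _ h)
    obtain ⟨l, hl⟩ := notAdj_bisector hG hT hne hx hy
    by_cases hlT : l ∈ T
    · exact ⟨Sum.inl l, mem_copySet_inl.mpr hlT,
        by rw [dist_inl_inl hG, dist_inl_inl hG, hl]⟩
    · have hlC : l ∈ C := (hUnion l).resolve_right hlT
      exact ⟨Sum.inr (l, w₀), mem_copySet_inr.mpr hlC,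
        by rw [dist_inr_inl hG, dist_inr_inl hG, hl]⟩
  · rw [mem_copySet_inl] at hx
    rw [mem_copySet_inr] at hy
    exact upper_mixed hG hF hx hy
  · rw [mem_copySet_inr] at hx
    rw [mem_copySet_inl] at hy
    obtain ⟨z, hz, he⟩ := upper_mixed (w := w) hG hF hy hx
    exact ⟨z, hz, he.symm⟩
  · rw [mem_copySet_inr] at hx hy
    by_cases hjj : j = j'
    · subst hjj
      have hjT : j ∈ T := (hUnion j).resolve_left hx
      exact ⟨Sum.inl j, mem_copySet_inl.mpr hjT,
        by rw [dist_inl_inr hG, dist_inl_inr hG]⟩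
    · obtain ⟨l, hl⟩ := notAdj_bisector hG hC hjj hx hy
      have hlj : l ≠ j := by
        rintro rfl
        rw [SimpleGraph.dist_self] at hl
        exact hjj (hG.dist_eq_zero_iff.mp hl.symm)
      have hlj' : l ≠ j' := by
        rintro rfl
        rw [SimpleGraph.dist_self] at hl
        exact hjj (hG.dist_eq_zero_iff.mp hl).symm
      by_cases hlT : l ∈ T
      · exact ⟨Sum.inl l, mem_copySet_inl.mpr hlT,
          by rw [dist_inl_inr hG, dist_inl_inr hG, hl]⟩
      · have hlC : l ∈ C := (hUnion l).resolve_right hlT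
        exact ⟨Sum.inr (l, w₀), mem_copySet_inr.mpr hlC,
          by rw [dist_inr_inr_ne hG hlj, dist_inr_inr_ne hG hlj', hl]⟩

end Upper

section Lower

variable [Fintype V] [Fintype W] [Nonempty W]
include hG

theorem lower {S : Set (V ⊕ V × W)} (hS : IsDistEqSet (corona G H) S) :
    ∃ C T : Set V, IsVertexCover (emptyBisector G) C ∧ IsVertexCover (emptyBisector G) T ∧
      IsForwardEqualizedPair G C T ∧ C.ncard * Fintype.card W + T.ncard ≤ S.ncard := by
  classical
  set C₀ : Set V := {i : V | ∀ u : W, Sum.inr (i, u) ∈ S} with hC₀def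
  set T₀ : Set V := {i : V | Sum.inl i ∈ S} with hT₀def
  have hfree : ∀ {i : V}, i ∉ C₀ → ∃ u, Sum.inr (i, u) ∉ S := by
    intro i hi
    by_contra h
    push_neg at h
    exact hi h
  have hbisct : ∀ {i j : V}, (emptyBisector G).Adj i j → ∀ l, G.dist l i ≠ G.dist l j :=
    fun hAdj l hl => Set.eq_empty_iff_forall_notMem.mp hAdj.2 l hl
  -- C₀ is a vertex cover of the empty bisector graph
  have hCcover : IsVertexCover (emptyBisector G) C₀ := by
    intro i j hAdj
    by_contra hcon
    push_neg at hcon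
    obtain ⟨u, hu⟩ := hfree hcon.1
    obtain ⟨w, hw⟩ := hfree hcon.2
    have hne : (Sum.inr (i, u) : V ⊕ V × W) ≠ Sum.inr (j, w) := by
      simp only [ne_eq, Sum.inr.injEq, Prod.mk.injEq, not_and]
      intro h
      exact absurd h hAdj.1
    obtain ⟨z, hzS, hz⟩ := hS hu hw hne
    have hdij : 0 < G.dist i j := hG.pos_dist_of_ne hAdj.1
    rcases z with l | ⟨l, y⟩
    · rw [dist_inl_inr hG, dist_inl_inr hG] at hz
      exact hbisct hAdj l (by omega)
    · by_cases hli : l = i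
      · subst hli
        have hy : y ≠ u := fun h => hu (h ▸ hzS)
        rw [dist_inr_inr_same hG, dist_inr_inr_ne hG hAdj.1] at hz
        rw [if_neg hy] at hz
        split_ifs at hz <;> omega
      · by_cases hlj : l = j
        · subst hlj
          have hy : y ≠ w := fun h => hw (h ▸ hzS)
          have hdji : 0 < G.dist l i := hG.pos_dist_of_ne (Ne.symm hAdj.1)
          rw [dist_inr_inr_ne hG (Ne.symm hAdj.1), dist_inr_inr_same hG] at hz
          rw [if_neg hy] at hz
          split_ifs at hz <;> omega
        · rw [dist_inr_inr_ne hG hli, dist_inr_inr_ne hG hlj] at hz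
          exact hbisct hAdj l (by omega)
  -- T₀ ∪ C₀ᶜ is a vertex cover of the empty bisector graph
  have hTcover : IsVertexCover (emptyBisector G) (T₀ ∪ C₀ᶜ) := by
    intro i j hAdj
    by_contra hcon
    push_neg at hcon
    have hiT : Sum.inl i ∉ S := fun h => hcon.1 (Or.inl h)
    have hjT : Sum.inl j ∉ S := fun h => hcon.2 (Or.inl h)
    have hne : (Sum.inl i : V ⊕ V × W) ≠ Sum.inl j := fun h => hAdj.1 (Sum.inl_injective h)
    obtain ⟨z, hzS, hz⟩ := hS hiT hjT hne
    rcases z with l | ⟨l, y⟩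
    · rw [dist_inl_inl hG, dist_inl_inl hG] at hz
      exact hbisct hAdj l hz
    · rw [dist_inr_inl hG, dist_inr_inl hG] at hz
      exact hbisct hAdj l (by omega)
  -- forward-equalized pair
  have hForward : IsForwardEqualizedPair G C₀ (T₀ ∪ C₀ᶜ) := by
    constructor
    · rw [Set.eq_univ_iff_forall]
      intro i
      by_cases h : i ∈ C₀
      · exact Or.inl h
      · exact Or.inr (Or.inr h)
    · intro a ha b hb
      have haT : Sum.inl a ∉ S := fun h => ha.2 (Or.inl h)
      obtain ⟨u, hu⟩ := hfree hb.2
      have hne : (Sum.inl a : V ⊕ V × W) ≠ Sum.inr (b, u) := by simp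
      obtain ⟨z, hzS, hz⟩ := hS haT hu hne
      have hab : a ≠ b := fun h => hb.2 (h ▸ ha.1)
      rcases z with l | ⟨l, y⟩
      · rw [dist_inl_inl hG, dist_inl_inr hG] at hz
        exact ⟨l, hz⟩
      · by_cases hlb : l = b
        · subst hlb
          have hy : y ≠ u := fun h => hu (h ▸ hzS)
          rw [dist_inr_inl hG, dist_inr_inr_same hG, if_neg hy] at hz
          have hba : G.dist l a ≠ 0 := fun h => hab ((hG.dist_eq_zero_iff).mp h).symm
          refine ⟨l, ?_⟩
          rw [SimpleGraph.dist_self]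
          split_ifs at hz <;> omega
        · rw [dist_inr_inl hG, dist_inr_inr_ne hG hlb] at hz
          exact ⟨l, by omega⟩
  -- every index outside C₀ and T₀ has a copy vertex in S
  have hL2 : ∀ i : V, i ∉ C₀ → i ∉ T₀ → ∃ u, Sum.inr (i, u) ∈ S := by
    intro i hiC hiT
    obtain ⟨u, hu⟩ := hfree hiC
    have hne : (Sum.inl i : V ⊕ V × W) ≠ Sum.inr (i, u) := by simp
    obtain ⟨z, hzS, hz⟩ := hS hiT hu hne
    rcases z with l | ⟨l, y⟩
    · rw [dist_inl_inl hG, dist_inl_inr hG] at hz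
      omega
    · by_cases hli : l = i
      · exact ⟨y, hli ▸ hzS⟩
      · rw [dist_inr_inl hG, dist_inr_inr_ne hG hli] at hz
        omega
  -- cardinality bookkeeping
  set R : Set V := (C₀ ∪ T₀)ᶜ with hRdef
  have hchoice : ∀ i : V, ∃ u : W, i ∈ R → Sum.inr (i, u) ∈ S := by
    intro i
    by_cases hi : i ∈ R
    · have hi' : i ∉ C₀ ∧ i ∉ T₀ := by
        constructor <;> intro h
        · exact hi (Or.inl h)
        · exact hi (Or.inr h)
      obtain ⟨u, hu⟩ := hL2 i hi'.1 hi'.2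
      exact ⟨u, fun _ => hu⟩
    · exact ⟨Classical.arbitrary W, fun h => absurd h hi⟩
  choose g hg using hchoice
  set B : Set (V ⊕ V × W) := copySet C₀ T₀ ∪ Sum.inr '' ((fun i => (i, g i)) '' R) with hBdef
  have hBsub : B ⊆ S := by
    rintro x (hx | ⟨p, ⟨i, hiR, rfl⟩, rfl⟩)
    · rcases hx with ⟨i, hi, rfl⟩ | ⟨p, hp, rfl⟩
      · exact hi
      · exact hp.1 p.2
    · exact hg i hiR
  have hdisj : Disjoint (copySet (W := W) C₀ T₀) (Sum.inr '' ((fun i => (i, g i)) '' R)) := by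
    rw [Set.disjoint_left]
    rintro x hx ⟨p, ⟨i, hiR, rfl⟩, rfl⟩
    rw [mem_copySet_inr] at hx
    exact hiR (Or.inl hx)
  have hginj : Function.Injective (fun i : V => (i, g i)) := fun a b h => congrArg Prod.fst h
  have hBcard : B.ncard = C₀.ncard * Fintype.card W + T₀.ncard + R.ncard := by
    rw [hBdef, Set.ncard_union_eq hdisj (Set.toFinite _) (Set.toFinite _),
      Set.ncard_image_of_injective _ Sum.inr_injective,
      Set.ncard_image_of_injective _ hginj, ncard_copySet]
  have hTstar : (T₀ ∪ C₀ᶜ).ncard = T₀.ncard + R.ncard := by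
    have heq : T₀ ∪ C₀ᶜ = T₀ ∪ R := by
      rw [hRdef]
      ext x
      simp only [Set.mem_union, Set.mem_compl_iff]
      tauto
    have hdisj2 : Disjoint T₀ R := by
      rw [Set.disjoint_left]
      intro x hx hx2
      exact hx2 (Or.inr hx)
    rw [heq, Set.ncard_union_eq hdisj2 (Set.toFinite _) (Set.toFinite _)]
  refine ⟨C₀, T₀ ∪ C₀ᶜ, hCcover, hTcover, hForward, ?_⟩
  have hle : B.ncard ≤ S.ncard := Set.ncard_le_ncard hBsub (Set.toFinite S)
  omega

end Lower

section Numeric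

variable [Fintype V] (Γ : SimpleGraph V)

omit hG

lemma vcNum_nonempty :
    {n | ∃ C : Set V, IsVertexCover Γ C ∧ C.ncard = n}.Nonempty :=
  ⟨(Set.univ : Set V).ncard, Set.univ, fun x _ _ => Or.inl (Set.mem_univ x), rfl⟩

lemma vcNum_spec : ∃ C : Set V, IsVertexCover Γ C ∧ C.ncard = vcNum Γ := by
  obtain ⟨C, hC, hcard⟩ := Nat.sInf_mem (vcNum_nonempty Γ)
  exact ⟨C, hC, hcard⟩

lemma vcNum_le {C : Set V} (hC : IsVertexCover Γ C) : vcNum Γ ≤ C.ncard :=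
  Nat.sInf_le ⟨C, hC, rfl⟩

lemma indepNum_bddAbove : BddAbove {n | ∃ A : Set V, IsIndepSet Γ A ∧ A.ncard = n} := by
  refine ⟨Fintype.card V, ?_⟩
  rintro n ⟨A, _, rfl⟩
  calc A.ncard ≤ (Set.univ : Set V).ncard :=
        Set.ncard_le_ncard (Set.subset_univ A) (Set.toFinite _)
  _ = Fintype.card V := by rw [Set.ncard_univ, Nat.card_eq_fintype_card]

lemma le_indepNum {A : Set V} (hA : IsIndepSet Γ A) : A.ncard ≤ indepNum Γ :=
  le_csSup (indepNum_bddAbove Γ) ⟨A, hA, rfl⟩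

lemma gallai : indepNum Γ + vcNum Γ = Fintype.card V := by
  obtain ⟨C, hC, hCcard⟩ := vcNum_spec Γ
  have hcompl : IsIndepSet Γ Cᶜ := fun x y hx hy hadj => (hC hadj).elim hx hy
  have h1 : Cᶜ.ncard ≤ indepNum Γ := le_indepNum Γ hcompl
  have h2 : C.ncard + Cᶜ.ncard = Fintype.card V := by
    rw [Set.ncard_add_ncard_compl, Nat.card_eq_fintype_card]
  have hssne : {n | ∃ A : Set V, IsIndepSet Γ A ∧ A.ncard = n}.Nonempty :=
    ⟨0, ∅, fun x _ hx => absurd hx (Set.notMem_empty x), Set.ncard_empty V⟩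
  obtain ⟨A, hA, hAcard⟩ := Nat.sSup_mem hssne (indepNum_bddAbove Γ)
  have hAcard' : A.ncard = indepNum Γ := hAcard
  have hAc : IsVertexCover Γ Aᶜ := by
    intro x y hadj
    by_contra hcon
    push_neg at hcon
    exact hA (Set.notMem_compl_iff.mp hcon.1) (Set.notMem_compl_iff.mp hcon.2) hadj
  have h3 : vcNum Γ ≤ Aᶜ.ncard := vcNum_le Γ hAc
  have h4 : A.ncard + Aᶜ.ncard = Fintype.card V := by
    rw [Set.ncard_add_ncard_compl, Nat.card_eq_fintype_card]
  omega

end Numeric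

end CoronaAux


/-- For every connected `G` there is `k(G)` with
`α(Ĝ) + β*(G) ≤ k(G) ≤ n(G)` such that `ξ(G ⊙ H) = β(Ĝ)·n(H) + k(G)` whenever
`n(H) > min{α(Ĝ), β(Ĝ) − β*(G) + 1}`, and `ξ(G ⊙ H) ≤ β(Ĝ)·n(H) + k(G)` whenever
`n(H) ≤ min{α(Ĝ), β(Ĝ) − β*(G) + 1}`. -/
theorem eqdim_corona_eventually_linear [Fintype V] (G : SimpleGraph V) (hG : G.Connected) :
    ∃ k : ℕ, indepNum (emptyBisector G) + betaStar G ≤ k ∧ k ≤ Fintype.card V ∧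
      (∀ (W : Type v) (_ : Fintype W) (_ : Nonempty W) (H : SimpleGraph W),
        min (indepNum (emptyBisector G)) (vcNum (emptyBisector G) - betaStar G + 1) <
          Fintype.card W →
        eqdim (corona G H) = vcNum (emptyBisector G) * Fintype.card W + k) ∧
      (∀ (W : Type v) (_ : Fintype W) (_ : Nonempty W) (H : SimpleGraph W),
        Fintype.card W ≤
          min (indepNum (emptyBisector G)) (vcNum (emptyBisector G) - betaStar G + 1) →
        eqdim (corona G H) ≤ vcNum (emptyBisector G) * Fintype.card W + k) := by
  classical
  obtain ⟨Cm, hCm, hCmcard⟩ := CoronaAux.vcNum_spec (emptyBisector G)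
  have hunivcover : IsVertexCover (emptyBisector G) (Set.univ : Set V) :=
    fun x _ _ => Or.inl (Set.mem_univ x)
  have hunivpair : IsForwardEqualizedPair G Cm Set.univ :=
    ⟨Set.union_univ Cm, fun a ha => absurd (Set.mem_univ a) ha.2⟩
  set K : Set ℕ := {t | ∃ C T : Set V, IsVertexCover (emptyBisector G) C ∧
      IsVertexCover (emptyBisector G) T ∧ IsForwardEqualizedPair G C T ∧
      C.ncard = vcNum (emptyBisector G) ∧ T.ncard = t} with hKdef
  have hKne : K.Nonempty :=
    ⟨(Set.univ : Set V).ncard, Cm, Set.univ, hCm, hunivcover, hunivpair, hCmcard, rfl⟩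
  obtain ⟨C₁, T₁, hC₁, hT₁, hF₁, hC₁card, hT₁card⟩ := Nat.sInf_mem hKne
  have hncardUniv : (Set.univ : Set V).ncard = Fintype.card V := by
    rw [Set.ncard_univ, Nat.card_eq_fintype_card]
  have hkn : sInf K ≤ Fintype.card V :=
    hncardUniv ▸ Nat.sInf_le ⟨Cm, Set.univ, hCm, hunivcover, hunivpair, hCmcard, rfl⟩
  have hgallai := CoronaAux.gallai (emptyBisector G)
  have hak : indepNum (emptyBisector G) + betaStar G ≤ sInf K := by
    have hIE := Set.ncard_union_add_ncard_inter C₁ T₁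
    have hbs : betaStar G ≤ (C₁ ∩ T₁).ncard := Nat.sInf_le ⟨C₁, T₁, hC₁, hT₁, hF₁, rfl⟩
    have hu : (C₁ ∪ T₁).ncard = Fintype.card V := by rw [hF₁.1, hncardUniv]
    omega
  have hupper : ∀ (W' : Type v) (iW : Fintype W') (iN : Nonempty W') (H : SimpleGraph W'),
      eqdim (corona G H) ≤ vcNum (emptyBisector G) * Fintype.card W' + sInf K := by
    intro W' iW iN H
    refine Nat.sInf_le ⟨CoronaAux.copySet C₁ T₁,
      CoronaAux.upper_isDistEqSet hG hC₁ hT₁ hF₁, ?_⟩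
    rw [CoronaAux.ncard_copySet, hC₁card, hT₁card]
  refine ⟨sInf K, hak, hkn, ?_, ?_⟩
  · intro W' iW iN H hlt
    refine le_antisymm (hupper W' iW iN H) ?_
    have hne : {n | ∃ S : Set (V ⊕ V × W'), IsDistEqSet (corona G H) S ∧ S.ncard = n}.Nonempty :=
      ⟨(Set.univ : Set (V ⊕ V × W')).ncard, Set.univ,
        fun x _ hx => absurd (Set.mem_univ x) hx, rfl⟩
    refine le_csInf hne ?_
    rintro b ⟨S, hSdes, rfl⟩
    obtain ⟨C, T, hC, hT, hF, hcard⟩ := CoronaAux.lower hG hSdes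
    have hβC : vcNum (emptyBisector G) ≤ C.ncard := CoronaAux.vcNum_le _ hC
    have hm1 : 1 ≤ Fintype.card W' := Fintype.card_pos
    rcases eq_or_lt_of_le hβC with heq | hlt2
    · have hkT : sInf K ≤ T.ncard := Nat.sInf_le ⟨C, T, hC, hT, hF, heq.symm, rfl⟩
      have hmm : vcNum (emptyBisector G) * Fintype.card W' = C.ncard * Fintype.card W' := by
        rw [heq]
      omega
    · have hβT : vcNum (emptyBisector G) ≤ T.ncard := CoronaAux.vcNum_le _ hT
      have hIE := Set.ncard_union_add_ncard_inter C T
      have hu : (C ∪ T).ncard = Fintype.card V := by rw [hF.1, hncardUniv]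
      have hbs : betaStar G ≤ (C ∩ T).ncard := Nat.sInf_le ⟨C, T, hC, hT, hF, rfl⟩
      set m := Fintype.card W' with hmdef
      have hm' : m - 1 + 1 = m := by omega
      have hsplitC : C.ncard * m = C.ncard * (m - 1) + C.ncard := by
        calc C.ncard * m = C.ncard * (m - 1 + 1) := by rw [hm']
        _ = C.ncard * (m - 1) + C.ncard := by ring
      have hsplitβ : vcNum (emptyBisector G) * m
          = vcNum (emptyBisector G) * (m - 1) + vcNum (emptyBisector G) := by
        calc vcNum (emptyBisector G) * m = vcNum (emptyBisector G) * (m - 1 + 1) := by rw [hm']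
        _ = vcNum (emptyBisector G) * (m - 1) + vcNum (emptyBisector G) := by ring
      have hmono : (vcNum (emptyBisector G) + 1) * (m - 1) ≤ C.ncard * (m - 1) :=
        Nat.mul_le_mul_right _ hlt2
      have hsucc : (vcNum (emptyBisector G) + 1) * (m - 1)
          = vcNum (emptyBisector G) * (m - 1) + (m - 1) := by ring
      rcases min_lt_iff.mp hlt with hm | hm
      · omega
      · omega
  · intro W' iW iN H _
    exact hupper W' iW iN H
end
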